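/- (Monotonicity in subsidy.) For subsidies w ≤ w': (i) V_w(π, y) ≤ V_{w'}(π, y) for all π ∈ [0,1] and y ∈ {0,1}; (ii) the not-play action value is strictly increasing in the subsidy, with L0_{w'}V_{w'}(π,1) − L0_wV_w(π,1) ≥ w' − w for all π ∈ [0,1]; (iii) the play action value is nondecreasing: L1_wV_w(π,1) ≤ L1_{w'}V_{w'}(π,1) for all π ∈ [0,1]. -/
import Mathlib


open Set

noncomputable section

/-- Expected immediate reward (success probability) at belief `π`. -/
def rhoB (ρ0 ρ1 π : ℝ) : ℝ := π * ρ0 + (1 - π) * ρ1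

/-- Belief update after a play resulting in success. -/
def Gam1 (p00 p10 ρ0 ρ1 π : ℝ) : ℝ :=
  (π * ρ0 * p00 + (1 - π) * ρ1 * p10) / (π * ρ0 + (1 - π) * ρ1)

/-- Belief update after a play resulting in failure. -/
def Gam0 (p00 p10 ρ0 ρ1 π : ℝ) : ℝ :=
  (π * (1 - ρ0) * p00 + (1 - π) * (1 - ρ1) * p10) /
    (π * (1 - ρ0) + (1 - π) * (1 - ρ1))

/-- Belief update without observation (natural Markov evolution). -/
def gam (p00 p10 π : ℝ) : ℝ := π * p00 + (1 - π) * p10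

/-- Action value of playing an available arm. -/
def Lact1 (p00 p10 ρ0 ρ1 β θ11 : ℝ) (V : ℝ → Bool → ℝ) (π : ℝ) : ℝ :=
  rhoB ρ0 ρ1 π
    + β * rhoB ρ0 ρ1 π *
        (θ11 * V (Gam1 p00 p10 ρ0 ρ1 π) true +
          (1 - θ11) * V (Gam1 p00 p10 ρ0 ρ1 π) false)
    + β * (1 - rhoB ρ0 ρ1 π) *
        (θ11 * V (Gam0 p00 p10 ρ0 ρ1 π) true +
          (1 - θ11) * V (Gam0 p00 p10 ρ0 ρ1 π) false)

/-- Action value of not playing an available arm (subsidy `w`). -/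
def Lact0a (p00 p10 β w θ01 : ℝ) (V : ℝ → Bool → ℝ) (π : ℝ) : ℝ :=
  w + β * (θ01 * V (gam p00 p10 π) true + (1 - θ01) * V (gam p00 p10 π) false)

/-- Action value for an unavailable arm (subsidy `w`). -/
def Lact0u (p00 p10 β w θ00 : ℝ) (V : ℝ → Bool → ℝ) (π : ℝ) : ℝ :=
  w + β * (θ00 * V (gam p00 p10 π) true + (1 - θ00) * V (gam p00 p10 π) false)

/-- Bellman operator of the constrained restless single-armed bandit with
stochastic availability; availability `y` is encoded by `Bool`. -/
def TwOp (p00 p10 ρ0 ρ1 β w θ11 θ01 θ00 : ℝ) (V : ℝ → Bool → ℝ) : ℝ → Bool → ℝ :=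
  fun π y =>
    if y then max (Lact1 p00 p10 ρ0 ρ1 β θ11 V π) (Lact0a p00 p10 β w θ01 V π)
    else Lact0u p00 p10 β w θ00 V π

/-- Bounded on the belief space `[0,1] × {0,1}`. -/
def BddOnIcc (V : ℝ → Bool → ℝ) : Prop :=
  ∃ C : ℝ, ∀ π ∈ Icc (0:ℝ) 1, ∀ y : Bool, |V π y| ≤ C

/-- Fixed point of an operator on the belief space `[0,1] × {0,1}`. -/
def FixedOnIcc (T : (ℝ → Bool → ℝ) → ℝ → Bool → ℝ) (V : ℝ → Bool → ℝ) : Prop :=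
  ∀ π ∈ Icc (0:ℝ) 1, ∀ y : Bool, T V π y = V π y

lemma gam_mem' {p00 p10 π : ℝ} (hp00 : p00 ∈ Icc (0:ℝ) 1) (hp10 : p10 ∈ Icc (0:ℝ) 1)
    (hπ : π ∈ Icc (0:ℝ) 1) : gam p00 p10 π ∈ Icc (0:ℝ) 1 := by
  obtain ⟨ha0, ha1⟩ := hp00; obtain ⟨hb0, hb1⟩ := hp10; obtain ⟨h0, h1⟩ := hπ
  unfold gam; constructor <;> nlinarith

lemma rhoB_mem' {ρ0 ρ1 π : ℝ} (hρ0 : 0 < ρ0) (hρ01 : ρ0 < ρ1) (hρ1 : ρ1 < 1)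
    (hπ : π ∈ Icc (0:ℝ) 1) : rhoB ρ0 ρ1 π ∈ Icc (0:ℝ) 1 := by
  obtain ⟨h0, h1⟩ := hπ
  unfold rhoB; constructor <;> nlinarith

lemma Gam1_mem' {p00 p10 ρ0 ρ1 π : ℝ} (hp00 : p00 ∈ Icc (0:ℝ) 1) (hp10 : p10 ∈ Icc (0:ℝ) 1)
    (hρ0 : 0 < ρ0) (hρ01 : ρ0 < ρ1) (hρ1 : ρ1 < 1) (hπ : π ∈ Icc (0:ℝ) 1) :
    Gam1 p00 p10 ρ0 ρ1 π ∈ Icc (0:ℝ) 1 := by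
  obtain ⟨h0, h1⟩ := hπ
  have hd : 0 < π * ρ0 + (1 - π) * ρ1 := by nlinarith
  unfold Gam1
  constructor
  · apply div_nonneg _ hd.le
    nlinarith [mul_nonneg (mul_nonneg h0 hρ0.le) hp00.1,
      mul_nonneg (mul_nonneg (by linarith : (0:ℝ) ≤ 1 - π) (by linarith : (0:ℝ) ≤ ρ1)) hp10.1]
  · rw [div_le_one hd]
    nlinarith [mul_le_of_le_one_right (mul_nonneg h0 hρ0.le) hp00.2,
      mul_le_of_le_one_right (mul_nonneg (by linarith : (0:ℝ) ≤ 1 - π) (by linarith : (0:ℝ) ≤ ρ1)) hp10.2]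

lemma Gam0_mem' {p00 p10 ρ0 ρ1 π : ℝ} (hp00 : p00 ∈ Icc (0:ℝ) 1) (hp10 : p10 ∈ Icc (0:ℝ) 1)
    (hρ0 : 0 < ρ0) (hρ01 : ρ0 < ρ1) (hρ1 : ρ1 < 1) (hπ : π ∈ Icc (0:ℝ) 1) :
    Gam0 p00 p10 ρ0 ρ1 π ∈ Icc (0:ℝ) 1 := by
  obtain ⟨h0, h1⟩ := hπ
  have hd : 0 < π * (1 - ρ0) + (1 - π) * (1 - ρ1) := by nlinarith
  unfold Gam0
  constructor
  · apply div_nonneg _ hd.le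
    nlinarith [mul_nonneg (mul_nonneg h0 (by linarith : (0:ℝ) ≤ 1 - ρ0)) hp00.1,
      mul_nonneg (mul_nonneg (by linarith : (0:ℝ) ≤ 1 - π) (by linarith : (0:ℝ) ≤ 1 - ρ1)) hp10.1]
  · rw [div_le_one hd]
    nlinarith [mul_le_of_le_one_right (mul_nonneg h0 (by linarith : (0:ℝ) ≤ 1 - ρ0)) hp00.2,
      mul_le_of_le_one_right (mul_nonneg (by linarith : (0:ℝ) ≤ 1 - π) (by linarith : (0:ℝ) ≤ 1 - ρ1)) hp10.2]

/-- **Monotonicity in subsidy.** For subsidies `w ≤ w'`: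
(i) `V_w(π,y) ≤ V_{w'}(π,y)`; (ii) the not-play action value grows at least
linearly, `L0_{w'}V_{w'}(π,1) − L0_w V_w(π,1) ≥ w' − w`; (iii) the play
action value is nondecreasing in the subsidy. -/
theorem stmt12 (p00 p10 ρ0 ρ1 β θ11 θ01 θ00 : ℝ)
    (hp00 : p00 ∈ Icc (0:ℝ) 1) (hp10 : p10 ∈ Icc (0:ℝ) 1)
    (hρ0 : 0 < ρ0) (hρ01 : ρ0 < ρ1) (hρ1 : ρ1 < 1)
    (hβ : β ∈ Ioo (0:ℝ) 1)
    (hθ11 : θ11 ∈ Icc (0:ℝ) 1) (hθ01 : θ01 ∈ Icc (0:ℝ) 1) (hθ00 : θ00 ∈ Icc (0:ℝ) 1)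
    (V : ℝ → ℝ → Bool → ℝ)
    (hVb : ∀ w : ℝ, BddOnIcc (V w))
    (hVfix : ∀ w : ℝ, FixedOnIcc (TwOp p00 p10 ρ0 ρ1 β w θ11 θ01 θ00) (V w)) :
    ∀ w w' : ℝ, w ≤ w' →
      (∀ π ∈ Icc (0:ℝ) 1, ∀ y : Bool, V w π y ≤ V w' π y)
      ∧ (∀ π ∈ Icc (0:ℝ) 1,
          w' - w ≤ Lact0a p00 p10 β w' θ01 (V w') π - Lact0a p00 p10 β w θ01 (V w) π)
      ∧ (∀ π ∈ Icc (0:ℝ) 1,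
          Lact1 p00 p10 ρ0 ρ1 β θ11 (V w) π ≤ Lact1 p00 p10 ρ0 ρ1 β θ11 (V w') π) := by
  intro w w' hww
  have hβ0 : (0:ℝ) ≤ β := hβ.1.le
  -- the set of differences
  set S : Set ℝ := {x | ∃ π ∈ Icc (0:ℝ) 1, ∃ y : Bool, V w π y - V w' π y = x} with hS
  have hS_ne : S.Nonempty := ⟨V w 0 true - V w' 0 true, 0, ⟨le_refl _, zero_le_one⟩, true, rfl⟩
  have hS_bdd : BddAbove S := by
    obtain ⟨C, hC⟩ := hVb w
    obtain ⟨C', hC'⟩ := hVb w'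
    refine ⟨C + C', ?_⟩
    rintro x ⟨π, hπ, y, rfl⟩
    have h1 := abs_le.mp (hC π hπ y)
    have h2 := abs_le.mp (hC' π hπ y)
    linarith [h1.2, h2.1]
  set M : ℝ := sSup S with hMdef
  have hdM : ∀ π ∈ Icc (0:ℝ) 1, ∀ y : Bool, V w π y - V w' π y ≤ M := by
    intro π hπ y
    exact le_csSup hS_bdd ⟨π, hπ, y, rfl⟩
  -- combination bound
  have hXc : ∀ θ ∈ Icc (0:ℝ) 1, ∀ q ∈ Icc (0:ℝ) 1,
      θ * V w q true + (1 - θ) * V w q false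
        ≤ θ * V w' q true + (1 - θ) * V w' q false + M := by
    intro θ hθ q hq
    nlinarith [mul_le_mul_of_nonneg_left (hdM q hq true) hθ.1,
      mul_le_mul_of_nonneg_left (hdM q hq false) (by linarith [hθ.2] : (0:ℝ) ≤ 1 - θ)]
  -- key contraction step
  have key : ∀ π ∈ Icc (0:ℝ) 1, ∀ y : Bool, V w π y - V w' π y ≤ β * M := by
    intro π hπ y
    rw [← hVfix w π hπ y, ← hVfix w' π hπ y]
    have hq : gam p00 p10 π ∈ Icc (0:ℝ) 1 := gam_mem' hp00 hp10 hπ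
    cases y with
    | false =>
        rw [show TwOp p00 p10 ρ0 ρ1 β w θ11 θ01 θ00 (V w) π false
              = Lact0u p00 p10 β w θ00 (V w) π from rfl,
           show TwOp p00 p10 ρ0 ρ1 β w' θ11 θ01 θ00 (V w') π false
              = Lact0u p00 p10 β w' θ00 (V w') π from rfl]
        simp only [Lact0u]
        have h := mul_le_mul_of_nonneg_left (hXc θ00 hθ00 (gam p00 p10 π) hq) hβ0
        nlinarith [h]
    | true =>
        rw [show TwOp p00 p10 ρ0 ρ1 β w θ11 θ01 θ00 (V w) π true
              = max (Lact1 p00 p10 ρ0 ρ1 β θ11 (V w) π) (Lact0a p00 p10 β w θ01 (V w) π) from rfl,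
           show TwOp p00 p10 ρ0 ρ1 β w' θ11 θ01 θ00 (V w') π true
              = max (Lact1 p00 p10 ρ0 ρ1 β θ11 (V w') π) (Lact0a p00 p10 β w' θ01 (V w') π) from rfl]
        have hq1 : Gam1 p00 p10 ρ0 ρ1 π ∈ Icc (0:ℝ) 1 := Gam1_mem' hp00 hp10 hρ0 hρ01 hρ1 hπ
        have hq0 : Gam0 p00 p10 ρ0 ρ1 π ∈ Icc (0:ℝ) 1 := Gam0_mem' hp00 hp10 hρ0 hρ01 hρ1 hπ
        have hρB : rhoB ρ0 ρ1 π ∈ Icc (0:ℝ) 1 := rhoB_mem' hρ0 hρ01 hρ1 hπ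
        have hA : Lact1 p00 p10 ρ0 ρ1 β θ11 (V w) π
            ≤ Lact1 p00 p10 ρ0 ρ1 β θ11 (V w') π + β * M := by
          unfold Lact1
          have h1 := mul_le_mul_of_nonneg_left (hXc θ11 hθ11 _ hq1)
            (mul_nonneg hβ0 hρB.1)
          have h0 := mul_le_mul_of_nonneg_left (hXc θ11 hθ11 _ hq0)
            (mul_nonneg hβ0 (by linarith [hρB.2] : (0:ℝ) ≤ 1 - rhoB ρ0 ρ1 π))
          nlinarith [h1, h0]
        have hB : Lact0a p00 p10 β w θ01 (V w) π
            ≤ Lact0a p00 p10 β w' θ01 (V w') π + β * M := by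
          unfold Lact0a
          have h := mul_le_mul_of_nonneg_left (hXc θ01 hθ01 (gam p00 p10 π) hq) hβ0
          nlinarith [h]
        have hmax := max_le_max hA hB
        rw [max_add_add_right] at hmax
        linarith
  have hMle : M ≤ β * M := by
    apply csSup_le hS_ne
    rintro x ⟨π, hπ, y, rfl⟩
    exact key π hπ y
  have hM0 : M ≤ 0 := by nlinarith [hβ.2]
  have hi : ∀ π ∈ Icc (0:ℝ) 1, ∀ y : Bool, V w π y ≤ V w' π y := by
    intro π hπ y
    linarith [hdM π hπ y]
  refine ⟨hi, ?_, ?_⟩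
  · intro π hπ
    have hq : gam p00 p10 π ∈ Icc (0:ℝ) 1 := gam_mem' hp00 hp10 hπ
    have ht := hi _ hq true
    have hf := hi _ hq false
    unfold Lact0a
    have h1 : 0 ≤ θ01 * (V w' (gam p00 p10 π) true - V w (gam p00 p10 π) true) :=
      mul_nonneg hθ01.1 (by linarith)
    have h2 : 0 ≤ (1 - θ01) * (V w' (gam p00 p10 π) false - V w (gam p00 p10 π) false) :=
      mul_nonneg (by linarith [hθ01.2]) (by linarith)
    nlinarith [mul_nonneg hβ0 (by linarith : (0:ℝ) ≤
      θ01 * (V w' (gam p00 p10 π) true - V w (gam p00 p10 π) true)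
        + (1 - θ01) * (V w' (gam p00 p10 π) false - V w (gam p00 p10 π) false))]
  · intro π hπ
    have hq1 : Gam1 p00 p10 ρ0 ρ1 π ∈ Icc (0:ℝ) 1 := Gam1_mem' hp00 hp10 hρ0 hρ01 hρ1 hπ
    have hq0 : Gam0 p00 p10 ρ0 ρ1 π ∈ Icc (0:ℝ) 1 := Gam0_mem' hp00 hp10 hρ0 hρ01 hρ1 hπ
    have hρB : rhoB ρ0 ρ1 π ∈ Icc (0:ℝ) 1 := rhoB_mem' hρ0 hρ01 hρ1 hπ
    have c1 : θ11 * V w (Gam1 p00 p10 ρ0 ρ1 π) true + (1 - θ11) * V w (Gam1 p00 p10 ρ0 ρ1 π) false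
        ≤ θ11 * V w' (Gam1 p00 p10 ρ0 ρ1 π) true + (1 - θ11) * V w' (Gam1 p00 p10 ρ0 ρ1 π) false := by
      nlinarith [mul_le_mul_of_nonneg_left (hi _ hq1 true) hθ11.1,
        mul_le_mul_of_nonneg_left (hi _ hq1 false) (by linarith [hθ11.2] : (0:ℝ) ≤ 1 - θ11)]
    have c0 : θ11 * V w (Gam0 p00 p10 ρ0 ρ1 π) true + (1 - θ11) * V w (Gam0 p00 p10 ρ0 ρ1 π) false
        ≤ θ11 * V w' (Gam0 p00 p10 ρ0 ρ1 π) true + (1 - θ11) * V w' (Gam0 p00 p10 ρ0 ρ1 π) false := by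
      nlinarith [mul_le_mul_of_nonneg_left (hi _ hq0 true) hθ11.1,
        mul_le_mul_of_nonneg_left (hi _ hq0 false) (by linarith [hθ11.2] : (0:ℝ) ≤ 1 - θ11)]
    unfold Lact1
    nlinarith [mul_le_mul_of_nonneg_left c1 (mul_nonneg hβ0 hρB.1),
      mul_le_mul_of_nonneg_left c0
        (mul_nonneg hβ0 (by linarith [hρB.2] : (0:ℝ) ≤ 1 - rhoB ρ0 ρ1 π))]
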